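/- Let N ≥ 2, let η_1, …, η_{N−1} be complex numbers (set η_N = 0), let x, y ∈ ℝ with z = x + iy ≠ 0, set p̂ = 2x and q̂ = −(x² + y²), and let a_0, …, a_N be complex numbers. Define b_{N+1} = 0, b_N = a_N, b_n = a_n + p̂ b_{n+1} + q̂ b_{n+2} for n = N−1, …, 1, and the perturbed sequence b̃_{N+1} = 0, b̃_N = a_N, b̃_n = (a_n + η_n) + p̂ b̃_{n+1} + q̂ b̃_{n+2} for n = N−1, …, 1. Then for every n with 1 ≤ n ≤ N, |b̃_n − b_n| ≤ (N − n + 1)·Σ_{k=n}^{N} |η_k|·|z|^{k−n}. -/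

import Mathlib

open Finset Complex

/-- `cheb z m = ∑_{j=0}^m z^j (conj z)^{m-j}`, i.e. `|z|^m U_m(x/|z|)`. -/
noncomputable def cheb (z : ℂ) (m : ℕ) : ℂ :=
  ∑ j ∈ Finset.range (m + 1), z ^ j * (starRingEnd ℂ z) ^ (m - j)

lemma cheb_zero (z : ℂ) : cheb z 0 = 1 := by simp [cheb]

lemma cheb_step (z : ℂ) (m : ℕ) :
    cheb z (m + 1) = z * cheb z m + (starRingEnd ℂ z) ^ (m + 1) := by
  unfold cheb
  rw [Finset.sum_range_succ', Finset.mul_sum]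
  congr 1
  · apply Finset.sum_congr rfl
    intro j hj
    rw [Nat.succ_sub_succ]
    ring
  · simp

lemma cheb_rec (z : ℂ) (p q : ℂ) (hp : p = z + starRingEnd ℂ z)
    (hq : q = -(z * starRingEnd ℂ z)) (m : ℕ) :
    cheb z (m + 2) = p * cheb z (m + 1) + q * cheb z m := by
  have h1 := cheb_step z (m + 1)
  have h2 := cheb_step z m
  rw [h1, h2, hp, hq]
  ring

lemma cheb_one (z : ℂ) : cheb z 1 = z + starRingEnd ℂ z := by
  rw [show (1 : ℕ) = 0 + 1 from rfl, cheb_step, cheb_zero]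
  ring

lemma cheb_abs (z : ℂ) (m : ℕ) :
    ‖cheb z m‖ ≤ ((m : ℝ) + 1) * ‖z‖ ^ m := by
  refine le_trans (norm_sum_le _ _) ?_
  have h : ∀ j ∈ Finset.range (m + 1),
      ‖z ^ j * (starRingEnd ℂ z) ^ (m - j)‖ = ‖z‖ ^ m := by
    intro j hj
    rw [Finset.mem_range] at hj
    rw [norm_mul, norm_pow, norm_pow, Complex.norm_conj, ← pow_add]
    congr 1
    omega
  rw [Finset.sum_congr rfl h, Finset.sum_const, Finset.card_range, nsmul_eq_mul]
  push_cast
  exact le_rfl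

/-- Perturbation bound for the Goertzel backward recurrence: if `b̃` is run
with the perturbed coefficients `a n + η n` (with `η N = 0`), then
`|b̃ n - b n| ≤ (N - n + 1) * ∑_{k=n}^{N} |η k| * |z|^(k-n)` for `1 ≤ n ≤ N`. -/
theorem goertzel_perturbation_bound (N : ℕ) (hN : 2 ≤ N) (a η : ℕ → ℂ)
    (hηN : η N = 0) (x y : ℝ) (z : ℂ)
    (hz : z = (x : ℂ) + (y : ℂ) * I) (hz0 : z ≠ 0)
    (phat qhat : ℝ) (hp : phat = 2 * x) (hq : qhat = -(x ^ 2 + y ^ 2))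
    (b : ℕ → ℂ) (hbN1 : b (N + 1) = 0) (hbN : b N = a N)
    (hb : ∀ n, 1 ≤ n → n ≤ N - 1 →
      b n = a n + (phat : ℂ) * b (n + 1) + (qhat : ℂ) * b (n + 2))
    (bt : ℕ → ℂ) (hbtN1 : bt (N + 1) = 0) (hbtN : bt N = a N)
    (hbt : ∀ n, 1 ≤ n → n ≤ N - 1 →
      bt n = (a n + η n) + (phat : ℂ) * bt (n + 1) + (qhat : ℂ) * bt (n + 2)) :
    ∀ n, 1 ≤ n → n ≤ N →
      ‖bt n - b n‖
        ≤ (N - n + 1 : ℕ) * ∑ k ∈ Icc n N, ‖η k‖ * ‖z‖ ^ (k - n) := by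
  have hre : z.re = x := by simp [hz]
  have him : z.im = y := by simp [hz]
  have hpz : (phat : ℂ) = z + starRingEnd ℂ z := by
    rw [Complex.add_conj, hre, hp]
  have hqz : (qhat : ℂ) = -(z * starRingEnd ℂ z) := by
    rw [Complex.mul_conj]
    have hns : Complex.normSq z = x ^ 2 + y ^ 2 := by
      rw [Complex.normSq_apply, hre, him]; ring
    rw [hns, hq]
    push_cast
    ring
  -- the exact error representation
  have key : ∀ d : ℕ, ∀ n : ℕ, N = n + d → 1 ≤ n →
      bt n - b n = ∑ k ∈ Icc n N, η k * cheb z (k - n) := by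
    intro d
    induction d using Nat.strong_induction_on with
    | _ d ih =>
      intro n hNd hn1
      rcases d with _ | _ | d
      · -- n = N
        have hnN : n = N := by omega
        subst hnN
        rw [hbtN, hbN, Finset.Icc_self, Finset.sum_singleton, hηN]
        simp
      · -- n = N - 1
        have hN1 : n + 1 = N := by omega
        have hnle : n ≤ N - 1 := by omega
        rw [hbt n hn1 hnle, hb n hn1 hnle]
        have e1 : bt (n + 1) = b (n + 1) := by rw [hN1, hbtN, hbN]
        have e2 : bt (n + 2) = b (n + 2) := by
          have h2 : n + 2 = N + 1 := by omega
          rw [h2, hbtN1, hbN1]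
        have hη : η (n + 1) = 0 := by rw [hN1]; exact hηN
        rw [← hN1, Finset.sum_Icc_succ_top (by omega : n ≤ n + 1),
          Finset.Icc_self, Finset.sum_singleton, hη, e1, e2]
        simp [cheb_zero]
      · -- n ≤ N - 2
        have hnle : n ≤ N - 1 := by omega
        have h1 := ih (d + 1) (by omega) (n + 1) (by omega) (by omega)
        have h2 := ih d (by omega) (n + 2) (by omega) (by omega)
        rw [hbt n hn1 hnle, hb n hn1 hnle]
        have hgoal : (a n + η n) + (phat : ℂ) * bt (n + 1) + (qhat : ℂ) * bt (n + 2)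
            - (a n + (phat : ℂ) * b (n + 1) + (qhat : ℂ) * b (n + 2))
            = η n + (phat : ℂ) * (bt (n + 1) - b (n + 1))
              + (qhat : ℂ) * (bt (n + 2) - b (n + 2)) := by ring
        rw [hgoal, h1, h2]
        have icc_range : ∀ m e : ℕ, N = m + e →
            ∑ k ∈ Icc m N, η k * cheb z (k - m)
              = ∑ j ∈ Finset.range (e + 1), η (m + j) * cheb z j := by
          intro m e hme
          rw [← Finset.Ico_add_one_right_eq_Icc, Finset.sum_Ico_eq_sum_range,
            show N + 1 - m = e + 1 by omega]
          apply Finset.sum_congr rfl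
          intro j hj
          have hjm : m + j - m = j := by omega
          rw [hjm]
        have hA := icc_range n (d + 1 + 1) hNd
        have hB := icc_range (n + 1) (d + 1) (by omega)
        have hC := icc_range (n + 2) d (by omega)
        rw [hA, hB, hC,
          Finset.sum_range_succ' (fun j => η (n + j) * cheb z j) (d + 1 + 1),
          Finset.sum_range_succ' (fun j => η (n + (j + 1)) * cheb z (j + 1)) (d + 1),
          Finset.sum_range_succ' (fun j => η (n + 1 + j) * cheb z j) (d + 1)]
        simp only [Nat.add_zero, zero_add, cheb_zero, mul_one]
        have hterm : ∀ j ∈ Finset.range (d + 1),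
            (phat : ℂ) * (η (n + 1 + (j + 1)) * cheb z (j + 1))
              + (qhat : ℂ) * (η (n + 2 + j) * cheb z j)
            = η (n + (j + 1 + 1)) * cheb z (j + 1 + 1) := by
          intro j hj
          show _ = η (n + (j + 2)) * cheb z (j + 2)
          rw [cheb_rec z (phat : ℂ) (qhat : ℂ) hpz hqz j]
          have e1 : n + 1 + (j + 1) = n + (j + 2) := by omega
          have e2 : n + 2 + j = n + (j + 2) := by omega
          rw [e1, e2]
          ring
        have hsum := Finset.sum_congr rfl hterm
        have hsplit := Finset.sum_add_distrib
          (s := Finset.range (d + 1))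
          (f := fun j => (phat : ℂ) * (η (n + 1 + (j + 1)) * cheb z (j + 1)))
          (g := fun j => (qhat : ℂ) * (η (n + 2 + j) * cheb z j))
        have hmul1 := Finset.mul_sum (Finset.range (d + 1))
          (fun j => η (n + 1 + (j + 1)) * cheb z (j + 1)) ((phat : ℂ))
        have hmul2 := Finset.mul_sum (Finset.range (d + 1))
          (fun j => η (n + 2 + j) * cheb z j) ((qhat : ℂ))
        have hc1 : cheb z 1 = (phat : ℂ) := by rw [cheb_one, hpz]
        linear_combination hmul1 + hmul2 + hsum - hsplit - η (n + 1) * hc1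
  intro n hn1 hnN
  rw [key (N - n) n (by omega) hn1]
  calc ‖∑ k ∈ Icc n N, η k * cheb z (k - n)‖
      ≤ ∑ k ∈ Icc n N, ‖η k * cheb z (k - n)‖ :=
        norm_sum_le _ _
    _ ≤ ∑ k ∈ Icc n N, (N - n + 1 : ℕ) * (‖η k‖ * ‖z‖ ^ (k - n)) := by
        apply Finset.sum_le_sum
        intro k hk
        rw [Finset.mem_Icc] at hk
        rw [norm_mul]
        have hr : (((k - n : ℕ) : ℝ) + 1) ≤ ((N - n + 1 : ℕ) : ℝ) := by
          exact_mod_cast (by omega : (k - n) + 1 ≤ N - n + 1)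
        have hb1 : ‖cheb z (k - n)‖
            ≤ ((N - n + 1 : ℕ) : ℝ) * ‖z‖ ^ (k - n) :=
          (cheb_abs z (k - n)).trans
            (mul_le_mul_of_nonneg_right hr (pow_nonneg (norm_nonneg z) _))
        calc ‖η k‖ * ‖cheb z (k - n)‖
            ≤ ‖η k‖ * (((N - n + 1 : ℕ) : ℝ) * ‖z‖ ^ (k - n)) :=
              mul_le_mul_of_nonneg_left hb1 (norm_nonneg _)
          _ = ((N - n + 1 : ℕ) : ℝ) * (‖η k‖ * ‖z‖ ^ (k - n)) := by
              ring
    _ = (N - n + 1 : ℕ) * ∑ k ∈ Icc n N, ‖η k‖ * ‖z‖ ^ (k - n) := by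
        rw [Finset.mul_sum]
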